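/- For every (φ,φ̄) ∈ G(T,R), the four spaces π_U(φ(W^♯)), π_U(φ^{-1}(W^♯)), π_{W*}(φ̄(U^♯)), π_{W*}(φ̄^{-1}(U^♯)) are finite-dimensional, where U^♯ := {0} × (ℕ→ℂ) ⊆ R, and dim π_U(φ(W^♯)) − dim π_U(φ^{-1}(W^♯)) = dim π_{W*}(φ̄(U^♯)) − dim π_{W*}(φ̄^{-1}(U^♯)). -/

import Mathlib

open Module Submodule

noncomputable section

abbrev TT : Type := (ℕ → ℂ) × (ℕ →₀ ℂ)
abbrev RR : Type := (ℕ →₀ ℂ) × (ℕ → ℂ)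

lemma lc_v_add (v w : ℕ → ℂ) (l : ℕ →₀ ℂ) :
    Finsupp.linearCombination ℂ (v + w) l
      = Finsupp.linearCombination ℂ v l + Finsupp.linearCombination ℂ w l := by
  classical
  simp only [Finsupp.linearCombination_apply]
  rw [← Finsupp.sum_add]
  exact Finsupp.sum_congr fun i _ => by simp [Pi.add_apply, smul_add, mul_add]

lemma lc_v_smul (c : ℂ) (v : ℕ → ℂ) (l : ℕ →₀ ℂ) :
    Finsupp.linearCombination ℂ (c • v) l = c • Finsupp.linearCombination ℂ v l := by
  classical
  simp only [Finsupp.linearCombination_apply, Finsupp.smul_sum]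
  exact Finsupp.sum_congr fun i _ => by simp [Pi.smul_apply, smul_comm, smul_eq_mul, mul_left_comm]

/-- The nondegenerate pairing `p : T × R → ℂ`,
`p((ω,u),(w,ν)) = Σ_i ω(i)w(i) + Σ_i u(i)ν(i)`. -/
def pairB : TT →ₗ[ℂ] RR →ₗ[ℂ] ℂ :=
  LinearMap.mk₂ ℂ
    (fun x y => Finsupp.linearCombination ℂ x.1 y.1 + Finsupp.linearCombination ℂ y.2 x.2)
    (fun x x' y => by
      simp only [Prod.fst_add, Prod.snd_add, lc_v_add, map_add]; ring)
    (fun c x y => by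
      simp only [Prod.smul_fst, Prod.smul_snd, lc_v_smul, map_smul, smul_add])
    (fun x y y' => by
      simp only [Prod.fst_add, Prod.snd_add, lc_v_add, map_add]; ring)
    (fun c x y => by
      simp only [Prod.smul_fst, Prod.smul_snd, lc_v_smul, map_smul, smul_add])

/-- The Mackey-group condition on a pair of automorphisms:
`p(φ x, y) = p(x, φ̄ y)` for all `x ∈ T`, `y ∈ R`. -/
def IsMackey (φ : TT ≃ₗ[ℂ] TT) (ψ : RR ≃ₗ[ℂ] RR) : Prop :=
  ∀ (x : TT) (y : RR), pairB (φ x) y = pairB x (ψ y)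

/-- `W^♯ = (ℕ→ℂ) × {0} ⊆ T`. -/
def Wsharp : Submodule ℂ TT := LinearMap.range (LinearMap.inl ℂ (ℕ → ℂ) (ℕ →₀ ℂ))

/-- `U^♯ = {0} × (ℕ→ℂ) ⊆ R`. -/
def Usharp : Submodule ℂ RR := LinearMap.range (LinearMap.inr ℂ (ℕ →₀ ℂ) (ℕ → ℂ))

/-- `V = (ℕ→₀ℂ) × (ℕ→₀ℂ) ⊆ T`. -/
def Vsub : Submodule ℂ TT :=
  LinearMap.range
    ((Finsupp.lcoeFun : (ℕ →₀ ℂ) →ₗ[ℂ] (ℕ → ℂ)).prodMap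
      (LinearMap.id : (ℕ →₀ ℂ) →ₗ[ℂ] (ℕ →₀ ℂ)))

/-- `W = (ℕ→₀ℂ) × {0} ⊆ T`. -/
def Wsub : Submodule ℂ TT :=
  LinearMap.range
    ((LinearMap.inl ℂ (ℕ → ℂ) (ℕ →₀ ℂ)).comp
      (Finsupp.lcoeFun : (ℕ →₀ ℂ) →ₗ[ℂ] (ℕ → ℂ)))

/-- `π_U : T → (ℕ→₀ℂ)`, the second projection. -/
def piU : TT →ₗ[ℂ] (ℕ →₀ ℂ) := LinearMap.snd ℂ (ℕ → ℂ) (ℕ →₀ ℂ)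

/-- `π_{W*} : R → (ℕ→₀ℂ)`, the first projection. -/
def piW : RR →ₗ[ℂ] (ℕ →₀ ℂ) := LinearMap.fst ℂ (ℕ →₀ ℂ) (ℕ → ℂ)

/-- The degree `d(φ) = dim π_U(φ(W^♯)) − dim π_U(φ^{-1}(W^♯))`. -/
def deg (φ : TT ≃ₗ[ℂ] TT) : ℤ :=
  (Module.finrank ℂ ((Wsharp.map φ.toLinearMap).map piU) : ℤ) -
    (Module.finrank ℂ ((Wsharp.map φ.symm.toLinearMap).map piU) : ℤ)

/-- `span {(δ_i, 0) : i ≥ n} ⊆ T`. -/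
def tailSpan (n : ℕ) : Submodule ℂ TT :=
  Submodule.span ℂ
    ((fun i => ((((Finsupp.single i (1 : ℂ)) : ℕ →₀ ℂ) : ℕ → ℂ), (0 : ℕ →₀ ℂ))) '' {i | n ≤ i})

/-- `W'` is E-commensurable of index `k` with `W`:
`W' = G ⊕ span{(δ_i,0) : i ≥ n}` with `G ⊆ V` finite-dimensional of dimension `n + k`. -/
def Ecomm (W' : Submodule ℂ TT) (k : ℤ) : Prop :=
  ∃ (n : ℕ) (G : Submodule ℂ TT), G ≤ Vsub ∧ FiniteDimensional ℂ G ∧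
    (Module.finrank ℂ G : ℤ) = (n : ℤ) + k ∧ Disjoint G (tailSpan n) ∧
    W' = G ⊔ tailSpan n

/-- `W'^⊥ = {y ∈ R : p(x,y) = 0 for all x ∈ W'}`. -/
def perpR (W' : Submodule ℂ TT) : Submodule ℂ RR :=
  ⨅ x ∈ (W' : Set TT), LinearMap.ker (pairB x)

/-- `Y^⊥ = {x ∈ T : p(x,y) = 0 for all y ∈ Y}`. -/
def perpT (Y : Submodule ℂ RR) : Submodule ℂ TT :=
  ⨅ y ∈ (Y : Set RR), LinearMap.ker (pairB.flip y)

/-- The action `φ·W' = φ((W'^⊥)^⊥) ∩ V`. -/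
def actOn (φ : TT ≃ₗ[ℂ] TT) (W' : Submodule ℂ TT) : Submodule ℂ TT :=
  ((perpT (perpR W')).map φ.toLinearMap) ⊓ Vsub

end



lemma pairB_apply (x : TT) (y : RR) : pairB x y
    = Finsupp.linearCombination ℂ x.1 y.1 + Finsupp.linearCombination ℂ y.2 x.2 := rfl


lemma lc_single (i : ℕ) (l : ℕ →₀ ℂ) :
    Finsupp.linearCombination ℂ (Pi.single i (1:ℂ)) l = l i := by
  classical
  simp [Finsupp.linearCombination_apply, Finsupp.sum, Pi.single_apply, mul_comm,
    Finset.sum_ite_eq', Finsupp.mem_support_iff]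
  intro h; simp [h]

lemma combin (u : ℕ → (ℕ →₀ ℂ))
    (H : ∀ ω : ℕ → ℂ, {j | Finsupp.linearCombination ℂ ω (u j) ≠ 0}.Finite) :
    {j | u j ≠ 0}.Finite := by
  classical
  have Hcol : ∀ i : ℕ, {j | u j i ≠ 0}.Finite := by
    intro i
    have := H (Pi.single i 1)
    simpa [lc_single] using this
  by_contra hJ
  have hJ' : {j | u j ≠ 0}.Infinite := hJ
  -- choice of next row
  have hnext : ∀ R : Finset ℕ, ∃ j, j ∉ R ∧ u j ≠ 0 ∧
      ∀ l ∈ R, ∀ i ∈ (u l).support, u j i = 0 := by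
    intro R
    have hbad : ((↑R : Set ℕ) ∪ ⋃ l ∈ R, ⋃ i ∈ (u l).support, {j | u j i ≠ 0}).Finite := by
      refine (R.finite_toSet).union ?_
      exact Set.Finite.biUnion R.finite_toSet fun l _ =>
        Set.Finite.biUnion (u l).support.finite_toSet fun i _ => Hcol i
    obtain ⟨j, hj⟩ := (hJ'.diff hbad).nonempty
    refine ⟨j, ?_, hj.1, ?_⟩
    · intro hjR; exact hj.2 (Or.inl hjR)
    · intro l hl i hi
      by_contra hne
      exact hj.2 (Or.inr (Set.mem_biUnion hl (Set.mem_biUnion hi hne)))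
  let next : Finset ℕ → ℕ := fun R => (hnext R).choose
  let rows : ℕ → Finset ℕ := fun m => Nat.rec ∅ (fun _ R => insert (next R) R) m
  let g : ℕ → ℕ := fun m => next (rows m)
  have hrows_succ : ∀ m, rows (m+1) = insert (g m) (rows m) := fun m => rfl
  have hg_notmem : ∀ m, g m ∉ rows m := fun m => (hnext (rows m)).choose_spec.1
  have hg_ne : ∀ m, u (g m) ≠ 0 := fun m => (hnext (rows m)).choose_spec.2.1
  have hg_perp : ∀ m, ∀ l ∈ rows m, ∀ i ∈ (u l).support, u (g m) i = 0 :=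
    fun m => (hnext (rows m)).choose_spec.2.2
  have hmem : ∀ {l m}, l < m → g l ∈ rows m := by
    intro l m hlm
    induction m with
    | zero => omega
    | succ n ih =>
      rw [hrows_succ]
      rcases Nat.lt_succ_iff_lt_or_eq.mp hlm with h | h
      · exact Finset.mem_insert_of_mem (ih h)
      · subst h; exact Finset.mem_insert_self _ _
  -- supports pairwise disjoint
  have hdisj : ∀ {l m}, l ≠ m → ∀ i ∈ (u l).support, u (g m) (g l) = u (g m) (g l) := fun _ _ _ => rfl
  have hperp' : ∀ {l m : ℕ}, l ≠ m → ∀ i, u (g l) i ≠ 0 → u (g m) i = 0 := by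
    intro l m hlm i hi
    rcases Nat.lt_or_ge l m with h | h
    · exact hg_perp m (g l) (hmem h) i (Finsupp.mem_support_iff.mpr hi)
    · have hml : m < l := lt_of_le_of_ne h (Ne.symm hlm)
      by_contra hne
      exact hi (hg_perp l (g m) (hmem hml) i (Finsupp.mem_support_iff.mpr hne))
  -- choose witness columns
  have hcol : ∀ m, ∃ i, u (g m) i ≠ 0 := by
    intro m
    by_contra hc
    push_neg at hc
    exact hg_ne m (Finsupp.ext fun i => hc i)
  let col : ℕ → ℕ := fun m => (hcol m).choose
  have hcolspec : ∀ m, u (g m) (col m) ≠ 0 := fun m => (hcol m).choose_spec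
  let ω : ℕ → ℂ := fun x => if ∃ m, col m = x then 1 else 0
  have hval : ∀ m, Finsupp.linearCombination ℂ ω (u (g m)) = u (g m) (col m) := by
    intro m
    rw [Finsupp.linearCombination_apply, Finsupp.sum]
    rw [Finset.sum_eq_single_of_mem (col m) (Finsupp.mem_support_iff.mpr (hcolspec m))]
    · have : ω (col m) = 1 := by simp only [ω]; rw [if_pos ⟨m, rfl⟩]
      rw [this]; simp
    · intro b hb hbne
      have hωb : ω b = 0 := by
        simp only [ω, ite_eq_right_iff]
        rintro ⟨m', rfl⟩
        exfalso
        rcases eq_or_ne m' m with h | h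
        · subst h; exact hbne rfl
        · exact Finsupp.mem_support_iff.mp hb (hperp' h (col m') (hcolspec m'))
      rw [hωb, smul_zero]
  have hginj : Function.Injective g := by
    intro l m hlm
    by_contra hne
    rcases Nat.lt_or_ge l m with h | h
    · exact hg_notmem m (hlm ▸ hmem h)
    · exact hg_notmem l (hlm ▸ hmem (lt_of_le_of_ne h (Ne.symm hne)))
  have : {j | Finsupp.linearCombination ℂ ω (u j) ≠ 0}.Infinite := by
    apply Set.infinite_of_injective_forall_mem (f := g) hginj
    intro m
    simp only [Set.mem_setOf_eq, hval m]
    exact hcolspec m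
  exact this (H ω)

lemma keyFin (f g : (ℕ → ℂ) →ₗ[ℂ] (ℕ →₀ ℂ))
    (hadj : ∀ ω ν, Finsupp.linearCombination ℂ ν (f ω) = Finsupp.linearCombination ℂ ω (g ν)) :
    FiniteDimensional ℂ (LinearMap.range f) := by
  classical
  set u : ℕ → (ℕ →₀ ℂ) := fun j => g (Pi.single j 1) with hu
  have hentry : ∀ (ω : ℕ → ℂ) (j : ℕ), f ω j = Finsupp.linearCombination ℂ ω (u j) := by
    intro ω j
    rw [← lc_single j (f ω), hadj]
  have hS : {j | u j ≠ 0}.Finite := by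
    apply combin
    intro ω
    have : {j | Finsupp.linearCombination ℂ ω (u j) ≠ 0} = ↑(f ω).support := by
      ext j; simp [← hentry, Finsupp.mem_support_iff]
    rw [this]
    exact (f ω).support.finite_toSet
  have hle : LinearMap.range f ≤ Finsupp.supported ℂ ℂ {j | u j ≠ 0} := by
    rintro x ⟨ω, rfl⟩
    rw [Finsupp.mem_supported]
    intro j hj
    simp only [Finset.mem_coe, Finsupp.mem_support_iff] at hj
    intro huj
    exact hj (by rw [hentry, huj, map_zero])
  have : FiniteDimensional ℂ (Finsupp.supported ℂ ℂ {j | u j ≠ 0}) := by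
    rw [Finsupp.supported_eq_span_single]
    exact FiniteDimensional.span_of_finite ℂ (hS.image _)
  exact Submodule.finiteDimensional_of_le hle

lemma keyLe (f g : (ℕ → ℂ) →ₗ[ℂ] (ℕ →₀ ℂ))
    (hadj : ∀ ω ν, Finsupp.linearCombination ℂ ν (f ω) = Finsupp.linearCombination ℂ ω (g ν))
    [FiniteDimensional ℂ (LinearMap.range f)] :
    finrank ℂ (LinearMap.range g) ≤ finrank ℂ (LinearMap.range f) := by
  classical
  haveI := keyFin g f (fun ω ν => (hadj ν ω).symm)
  set r := finrank ℂ (LinearMap.range f) with hr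
  haveI := Module.Free.of_divisionRing (K := ℂ) (V := LinearMap.range f)
  let B := finBasis ℂ (LinearMap.range f)
  have hB : ∀ k : Fin r, ∃ ω, f ω = (B k : ℕ →₀ ℂ) := fun k => (B k).2
  let ω : Fin r → (ℕ → ℂ) := fun k => (hB k).choose
  have hω : ∀ k, f (ω k) = (B k : ℕ →₀ ℂ) := fun k => (hB k).choose_spec
  -- key: if all pairings with ω k vanish then g ν = 0
  have hker : ∀ ν : ℕ → ℂ,
      (∀ k, Finsupp.linearCombination ℂ (ω k) (g ν) = 0) → g ν = 0 := by
    intro ν hν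
    have hall : ∀ x ∈ LinearMap.range f, Finsupp.linearCombination ℂ ν x = 0 := by
      intro x hx
      -- x = ↑y for y in range f; use basis span
      lift x to LinearMap.range f using hx with y
      have hy : y ∈ Submodule.span ℂ (Set.range B) := by
        rw [B.span_eq]; trivial
      induction hy using Submodule.span_induction with
      | mem z hz =>
        obtain ⟨k, rfl⟩ := hz
        rw [← hω k, hadj]
        exact hν k
      | zero => simp
      | add a b _ _ ha hb => simp only [Submodule.coe_add, map_add, ha, hb, add_zero]
      | smul c a _ ha => simp only [Submodule.coe_smul, map_smul, ha, smul_zero]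
    have : ∀ ω' : ℕ → ℂ, Finsupp.linearCombination ℂ ω' (g ν) = 0 := by
      intro ω'
      rw [← hadj]
      exact hall _ (LinearMap.mem_range_self f ω')
    ext i
    rw [← lc_single i (g ν), this]
    rfl
  -- injective map from range g to Fin r → ℂ
  let Φ : (ℕ →₀ ℂ) →ₗ[ℂ] (Fin r → ℂ) :=
    LinearMap.pi fun k => Finsupp.linearCombination ℂ (ω k)
  have hkerΦ : LinearMap.ker (Φ.comp (LinearMap.range g).subtype) = ⊥ := by
    rw [LinearMap.ker_eq_bot']
    rintro ⟨x, hx⟩ hΦ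
    obtain ⟨ν, rfl⟩ := hx
    have h0 : g ν = 0 := by
      apply hker
      intro k
      exact congrFun hΦ k
    exact Subtype.ext h0
  have hinj : Function.Injective (Φ.comp (LinearMap.range g).subtype) :=
    by
      rintro ⟨x, ν1, rfl⟩ ⟨y, ν2, rfl⟩ hab
      apply Subtype.ext
      have h0 : g (ν1 - ν2) = 0 := hker _ (fun k => by
        have hk := congrFun hab k
        change Finsupp.linearCombination ℂ (ω k) (g ν1)
          = Finsupp.linearCombination ℂ (ω k) (g ν2) at hk
        rw [map_sub, map_sub, hk, sub_self])
      rw [map_sub] at h0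
      exact sub_eq_zero.mp h0
  calc finrank ℂ (LinearMap.range g) ≤ finrank ℂ (Fin r → ℂ) :=
        LinearMap.finrank_le_finrank_of_injective hinj
    _ = r := by simp

/-- The four spaces `π_U(φ(W^♯))`, `π_U(φ^{-1}(W^♯))`, `π_{W*}(φ̄(U^♯))`,
`π_{W*}(φ̄^{-1}(U^♯))` are finite-dimensional, and the two differences of dimensions agree. -/
theorem stmt7 (φ : TT ≃ₗ[ℂ] TT) (ψ : RR ≃ₗ[ℂ] RR) (h : IsMackey φ ψ) :
    FiniteDimensional ℂ ((Wsharp.map φ.toLinearMap).map piU) ∧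
    FiniteDimensional ℂ ((Wsharp.map φ.symm.toLinearMap).map piU) ∧
    FiniteDimensional ℂ ((Usharp.map ψ.toLinearMap).map piW) ∧
    FiniteDimensional ℂ ((Usharp.map ψ.symm.toLinearMap).map piW) ∧
    (Module.finrank ℂ ((Wsharp.map φ.toLinearMap).map piU) : ℤ)
        - (Module.finrank ℂ ((Wsharp.map φ.symm.toLinearMap).map piU) : ℤ)
      = (Module.finrank ℂ ((Usharp.map ψ.toLinearMap).map piW) : ℤ)
        - (Module.finrank ℂ ((Usharp.map ψ.symm.toLinearMap).map piW) : ℤ) := by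
  classical
  have hsymm : IsMackey φ.symm ψ.symm := by
    intro x y
    have := h (φ.symm x) (ψ.symm y)
    simp only [LinearEquiv.apply_symm_apply] at this
    exact this.symm
  -- the four corner operators
  set c : (ℕ → ℂ) →ₗ[ℂ] (ℕ →₀ ℂ) :=
    piU.comp (φ.toLinearMap.comp (LinearMap.inl ℂ (ℕ → ℂ) (ℕ →₀ ℂ))) with hc
  set c' : (ℕ → ℂ) →ₗ[ℂ] (ℕ →₀ ℂ) :=
    piU.comp (φ.symm.toLinearMap.comp (LinearMap.inl ℂ (ℕ → ℂ) (ℕ →₀ ℂ))) with hc'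
  set b : (ℕ → ℂ) →ₗ[ℂ] (ℕ →₀ ℂ) :=
    piW.comp (ψ.toLinearMap.comp (LinearMap.inr ℂ (ℕ →₀ ℂ) (ℕ → ℂ))) with hb
  set b' : (ℕ → ℂ) →ₗ[ℂ] (ℕ →₀ ℂ) :=
    piW.comp (ψ.symm.toLinearMap.comp (LinearMap.inr ℂ (ℕ →₀ ℂ) (ℕ → ℂ))) with hb'
  -- adjointness from the Mackey condition
  have hadj : ∀ (Φ : TT ≃ₗ[ℂ] TT) (Ψ : RR ≃ₗ[ℂ] RR), IsMackey Φ Ψ → ∀ ω ν,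
      Finsupp.linearCombination ℂ ν
        (piU.comp (Φ.toLinearMap.comp (LinearMap.inl ℂ (ℕ → ℂ) (ℕ →₀ ℂ))) ω)
      = Finsupp.linearCombination ℂ ω
        (piW.comp (Ψ.toLinearMap.comp (LinearMap.inr ℂ (ℕ →₀ ℂ) (ℕ → ℂ))) ν) := by
    intro Φ Ψ hM ω ν
    have := hM (ω, (0 : ℕ →₀ ℂ)) ((0 : ℕ →₀ ℂ), ν)
    rw [pairB_apply, pairB_apply] at this
    simpa [piU, piW] using this
  have h1 := hadj φ ψ h
  have h2 := hadj φ.symm ψ.symm hsymm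
  -- range identifications
  have e1 : (Wsharp.map φ.toLinearMap).map piU = LinearMap.range c := by
    rw [Wsharp, ← LinearMap.range_comp, ← LinearMap.range_comp]
  have e2 : (Wsharp.map φ.symm.toLinearMap).map piU = LinearMap.range c' := by
    rw [Wsharp, ← LinearMap.range_comp, ← LinearMap.range_comp]
  have e3 : (Usharp.map ψ.toLinearMap).map piW = LinearMap.range b := by
    rw [Usharp, ← LinearMap.range_comp, ← LinearMap.range_comp]
  have e4 : (Usharp.map ψ.symm.toLinearMap).map piW = LinearMap.range b' := by
    rw [Usharp, ← LinearMap.range_comp, ← LinearMap.range_comp]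
  haveI f1 : FiniteDimensional ℂ (LinearMap.range c) := keyFin c b h1
  haveI f2 : FiniteDimensional ℂ (LinearMap.range c') := keyFin c' b' h2
  haveI f3 : FiniteDimensional ℂ (LinearMap.range b) :=
    keyFin b c (fun ω ν => (h1 ν ω).symm)
  haveI f4 : FiniteDimensional ℂ (LinearMap.range b') :=
    keyFin b' c' (fun ω ν => (h2 ν ω).symm)
  have eq1 : Module.finrank ℂ (LinearMap.range c) = Module.finrank ℂ (LinearMap.range b) :=
    le_antisymm (keyLe b c (fun ω ν => (h1 ν ω).symm)) (keyLe c b h1)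
  have eq2 : Module.finrank ℂ (LinearMap.range c') = Module.finrank ℂ (LinearMap.range b') :=
    le_antisymm (keyLe b' c' (fun ω ν => (h2 ν ω).symm)) (keyLe c' b' h2)
  rw [e1, e2, e3, e4]
  exact ⟨f1, f2, f3, f4, by rw [eq1, eq2]⟩
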